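/- Let ρ: W → GL(V) be a finite-dimensional representation of a group W, and let s₁, …, s_k ∈ W be such that each s_i acts on V as a generalized reflection with reflection hyperplane H_i. Then for every 0 ≤ d ≤ dim V, the subspace {v ∈ ⋀^d V : s_i · v = v for all i = 1, …, k} equals ⋀^d (⋂_{1 ≤ i ≤ k} H_i), regarded naturally as a subspace of ⋀^d V. -/

import Mathlib

open Module ExteriorAlgebra

variable {F : Type*} [Field F] {V : Type*} [AddCommGroup V] [Module F V]
  {V₂ : Type*} [AddCommGroup V₂] [Module F V₂]

/-- A (generalized) reflection: a diagonalizable endomorphism `s` with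
`rank (s - id) = 1`. -/
def IsReflection (s : V →ₗ[F] V) : Prop :=
  (⨆ μ : F, Module.End.eigenspace s μ) = ⊤ ∧
    Module.finrank F (LinearMap.range (s - LinearMap.id)) = 1

theorem extPower_map_mem (d : ℕ) (f : V →ₗ[F] V₂) {x : ExteriorAlgebra F V}
    (hx : x ∈ ⋀[F]^d V) : ExteriorAlgebra.map f x ∈ ⋀[F]^d V₂ := by
  have h : Submodule.map (ExteriorAlgebra.map f).toLinearMap (⋀[F]^d V) ≤ ⋀[F]^d V₂ := by
    rw [exteriorPower, Submodule.map_pow, ι_range_map_map]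
    have h1 : Submodule.map (ι F (M := V₂)) (LinearMap.range f)
        ≤ LinearMap.range (ι F (M := V₂)) := by
      rintro - ⟨y, -, rfl⟩
      exact ⟨y, rfl⟩
    exact pow_le_pow_left' h1 d
  exact h ⟨x, hx, rfl⟩

/-- The linear map induced on `d`-th exterior powers by a linear map; for the inclusion
`H.subtype` of a subspace `H ⊆ V` this realizes `⋀^d H` as a subspace of `⋀^d V`
(via its range). -/
noncomputable def extMap (d : ℕ) (f : V →ₗ[F] V₂) : (⋀[F]^d V) →ₗ[F] (⋀[F]^d V₂) :=
  (ExteriorAlgebra.map f).toLinearMap.restrict (fun _ hx => extPower_map_mem d f hx)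

@[simp] theorem extMap_apply_coe (d : ℕ) (f : V →ₗ[F] V₂) (x : ⋀[F]^d V) :
    (extMap d f x : ExteriorAlgebra F V₂) = ExteriorAlgebra.map f x := rfl

variable {W : Type*} [Group W]

/-- The representation of `W` on the `d`-th exterior power `⋀^d V` induced by a
representation of `W` on `V`, given by `w · (v₁ ∧ ⋯ ∧ v_d) = (w·v₁) ∧ ⋯ ∧ (w·v_d)`. -/
noncomputable def extRep (ρ : Representation F W V) (d : ℕ) :
    Representation F W (⋀[F]^d V) where
  toFun w := extMap d (ρ w)
  map_one' := by
    apply LinearMap.ext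
    intro x
    apply Subtype.ext
    simp only [extMap_apply_coe, map_one]
    show (ExteriorAlgebra.map (LinearMap.id) : _) _ = _
    rw [ExteriorAlgebra.map_id]
    rfl
  map_mul' a b := by
    apply LinearMap.ext
    intro x
    apply Subtype.ext
    simp only [extMap_apply_coe, map_mul]
    show (ExteriorAlgebra.map (ρ a ∘ₗ ρ b) : _) _ = _
    rw [← ExteriorAlgebra.map_comp_map]
    rfl

/-- Irreducibility (simplicity) of a representation: the space is nonzero and the only
invariant subspaces are `⊥` and `⊤`. -/
def Representation.IsIrreducibleRep (ρ : Representation F W V) : Prop :=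
  Nontrivial V ∧
    ∀ U : Submodule F V, (∀ w : W, ∀ v ∈ U, ρ w v ∈ U) → U = ⊥ ∨ U = ⊤

/-- Isomorphism of two representations of `W`: an equivariant linear equivalence. -/
def Representation.Iso {F W : Type*} [CommSemiring F] [Monoid W]
    {V₁ V₂ : Type*} [AddCommMonoid V₁] [Module F V₁] [AddCommMonoid V₂] [Module F V₂]
    (ρ₁ : Representation F W V₁) (ρ₂ : Representation F W V₂) : Prop :=
  ∃ e : V₁ ≃ₗ[F] V₂, ∀ (w : W) (v : V₁), e (ρ₁ w v) = ρ₂ w (e v)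

/-- The wedge product `v 0 ∧ v 1 ∧ ⋯ ∧ v (d-1)` as an element of `⋀^d V`. -/
noncomputable def wedge (d : ℕ) (v : Fin d → V) : ⋀[F]^d V :=
  ⟨ExteriorAlgebra.ιMulti F d v, ExteriorAlgebra.ιMulti_range F d ⟨v, rfl⟩⟩

/-- The span of `d`-fold wedges of vectors of `A`. -/
noncomputable def Ealg (A : Submodule F V) (d : ℕ) : Submodule F (ExteriorAlgebra F V) :=
  Submodule.span F (Set.range fun v : Fin d → A => ιMulti F d fun i => (v i : V))

theorem Ealg_mono {A B : Submodule F V} (h : A ≤ B) (d : ℕ) : Ealg A d ≤ Ealg B d := by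
  apply Submodule.span_le.2
  rintro - ⟨v, rfl⟩
  exact Submodule.subset_span ⟨fun i => ⟨v i, h (v i).2⟩, rfl⟩

theorem Ealg_fix {A : Submodule F V} {f : V →ₗ[F] V} (hf : ∀ a ∈ A, f a = a) {d : ℕ}
    {x : ExteriorAlgebra F V} (hx : x ∈ Ealg A d) : ExteriorAlgebra.map f x = x := by
  induction hx using Submodule.span_induction with
  | mem y hy =>
    obtain ⟨v, rfl⟩ := hy
    rw [map_apply_ιMulti]
    congr 1
    funext i
    exact hf _ (v i).2
  | zero => simp
  | add a b _ _ ha hb => rw [map_add, ha, hb]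
  | smul t a _ ha => rw [map_smul, ha]

theorem map_mem_Ealg {A : Submodule F V} {f : V →ₗ[F] V} (hf : ∀ v, f v ∈ A) {d : ℕ}
    {x : ExteriorAlgebra F V} (hx : x ∈ ⋀[F]^d V) :
    ExteriorAlgebra.map f x ∈ Ealg A d := by
  rw [← ιMulti_span_fixedDegree] at hx
  induction hx using Submodule.span_induction with
  | mem y hy =>
    obtain ⟨v, rfl⟩ := hy
    rw [map_apply_ιMulti]
    exact Submodule.subset_span ⟨fun i => ⟨f (v i), hf _⟩, rfl⟩
  | zero => simp
  | add a b _ _ ha hb => rw [map_add]; exact add_mem ha hb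
  | smul t a _ ha => rw [map_smul]; exact Submodule.smul_mem _ _ ha

theorem mem_exteriorPower_mem_Ealg_top {d : ℕ} {x : ExteriorAlgebra F V}
    (hx : x ∈ ⋀[F]^d V) : x ∈ Ealg (⊤ : Submodule F V) d := by
  have := map_mem_Ealg (A := (⊤ : Submodule F V)) (f := LinearMap.id)
    (fun v => Submodule.mem_top) hx
  rwa [ExteriorAlgebra.map_id, AlgHom.id_apply] at this

theorem map_subtype_exteriorPower_eq_Ealg (A : Submodule F V) (d : ℕ) :
    Submodule.map (ExteriorAlgebra.map A.subtype).toLinearMap (⋀[F]^d A) = Ealg A d := by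
  rw [← ιMulti_span_fixedDegree, Submodule.map_span, Ealg]
  congr 1
  ext y
  simp only [Set.mem_image, Set.mem_range]
  constructor
  · rintro ⟨-, ⟨v, rfl⟩, rfl⟩
    refine ⟨v, ?_⟩
    show ιMulti F d (fun i => ↑(v i)) = ExteriorAlgebra.map A.subtype (ιMulti F d v)
    rw [map_apply_ιMulti]
    rfl
  · rintro ⟨v, rfl⟩
    refine ⟨ιMulti F d v, ⟨v, rfl⟩, ?_⟩
    show ExteriorAlgebra.map A.subtype (ιMulti F d v) = _
    rw [map_apply_ιMulti]
    rfl

theorem mul_Ealg {A : Submodule F V} {h : V} (hh : h ∈ A) {d : ℕ}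
    {x : ExteriorAlgebra F V} (hx : x ∈ Ealg A d) :
    ExteriorAlgebra.ι F h * x ∈ Ealg A (d + 1) := by
  induction hx using Submodule.span_induction with
  | mem y hy =>
    obtain ⟨v, rfl⟩ := hy
    apply Submodule.subset_span
    refine Set.mem_range.2 ⟨Fin.cons (α := fun _ => A) ⟨h, hh⟩ v, ?_⟩
    show ιMulti F (d + 1) (fun i => ((Fin.cons (α := fun _ => A) ⟨h, hh⟩ v i : A) : V)) = _
    have h0 : (fun i => ((Fin.cons (α := fun _ => A) ⟨h, hh⟩ v) i : V))
        = Fin.cons h (fun i => (v i : V)) := by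
      funext i
      refine Fin.cases rfl (fun j => ?_) i
      simp
    rw [h0, ιMulti_succ_apply]
    simp [Matrix.vecTail, Function.comp_def]
  | zero => simp
  | add a b _ _ ha hb => rw [mul_add]; exact add_mem ha hb
  | smul t a _ ha => rw [mul_smul_comm]; exact Submodule.smul_mem _ _ ha

/-- `Ealg A (d-1)`, with junk value `⊥` for `d = 0`. -/
noncomputable def EalgPred (A : Submodule F V) : ℕ → Submodule F (ExteriorAlgebra F V)
  | 0 => ⊥
  | (n+1) => Ealg A n

theorem mul_EalgPred {A : Submodule F V} {h : V} (hh : h ∈ A) {d : ℕ}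
    {x : ExteriorAlgebra F V} (hx : x ∈ EalgPred A d) :
    ExteriorAlgebra.ι F h * x ∈ EalgPred A (d + 1) := by
  match d with
  | 0 => simp only [EalgPred, Submodule.mem_bot] at hx; simp [hx, EalgPred]
  | (n+1) => exact mul_Ealg hh hx

theorem EalgPred_fix {A : Submodule F V} {f : V →ₗ[F] V} (hf : ∀ a ∈ A, f a = a) {d : ℕ}
    {x : ExteriorAlgebra F V} (hx : x ∈ EalgPred A d) : ExteriorAlgebra.map f x = x := by
  match d with
  | 0 => simp only [EalgPred, Submodule.mem_bot] at hx; simp [hx]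
  | (n+1) => exact Ealg_fix hf hx

theorem reflection_struct [FiniteDimensional F V] {s : V →ₗ[F] V} (hs : IsReflection s) :
    ∃ (c : F) (e : V), c ≠ 1 ∧ s e = c • e ∧
      ∀ v : V, ∃ h ∈ LinearMap.ker (s - LinearMap.id), ∃ t : F, v = h + t • e := by
  set H := LinearMap.ker (s - LinearMap.id (R := F) (M := V)) with hH
  have hmem : ∀ x, x ∈ H ↔ s x = x := by
    intro x
    simp [hH, LinearMap.mem_ker, LinearMap.sub_apply, sub_eq_zero]
  -- find an eigenvector with eigenvalue ≠ 1
  have hex : ∃ c : F, c ≠ 1 ∧ Module.End.eigenspace s c ≠ ⊥ := by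
    by_contra hc
    push_neg at hc
    have hle : ∀ μ : F, Module.End.eigenspace s μ ≤ H := by
      intro μ
      rcases eq_or_ne μ 1 with rfl | hμ
      · intro x hx
        rw [hmem]
        simpa using Module.End.mem_eigenspace_iff.1 hx
      · rw [hc μ hμ]
        exact bot_le
    have hHtop : H = ⊤ := top_le_iff.1 (hs.1 ▸ iSup_le hle)
    have h0 : s - LinearMap.id = 0 := LinearMap.ker_eq_top.1 hHtop
    have h2 := hs.2
    rw [h0, LinearMap.range_zero, finrank_bot] at h2
    exact zero_ne_one h2
  obtain ⟨c, hc1, hc2⟩ := hex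
  obtain ⟨e, heig, he0⟩ := Submodule.exists_mem_ne_zero_of_ne_bot hc2
  have hse : s e = c • e := Module.End.mem_eigenspace_iff.1 heig
  have heH : e ∉ H := by
    rw [hmem, hse]
    intro h
    have : (c - 1) • e = 0 := by rw [sub_smul, one_smul, h, sub_self]
    rcases smul_eq_zero.1 this with h' | h'
    · exact hc1 (sub_eq_zero.1 h')
    · exact he0 h'
  have hdisj : H ⊓ Submodule.span F {e} = ⊥ := by
    rw [Submodule.eq_bot_iff]
    rintro x ⟨hxH, hxe⟩
    obtain ⟨t, rfl⟩ := Submodule.mem_span_singleton.1 hxe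
    rcases eq_or_ne t 0 with rfl | ht
    · simp
    · have heH' : e ∈ H := by
        have h3 := Submodule.smul_mem H t⁻¹ hxH
        rwa [smul_smul, inv_mul_cancel₀ ht, one_smul] at h3
      exact (heH heH').elim
  have hsup : H ⊔ Submodule.span F {e} = ⊤ := by
    apply Submodule.eq_top_of_finrank_eq
    have h1 := Submodule.finrank_sup_add_finrank_inf_eq H (Submodule.span F {e})
    rw [hdisj, finrank_bot, add_zero, finrank_span_singleton he0] at h1
    have h2 := LinearMap.finrank_range_add_finrank_ker (s - LinearMap.id (R := F) (M := V))
    rw [hs.2] at h2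
    rw [← hH] at h2
    rw [h1]
    omega
  refine ⟨c, e, hc1, hse, fun v => ?_⟩
  have hv : v ∈ H ⊔ Submodule.span F {e} := hsup ▸ Submodule.mem_top
  obtain ⟨h, hh, z, hz, rfl⟩ := Submodule.mem_sup.1 hv
  obtain ⟨t, rfl⟩ := Submodule.mem_span_singleton.1 hz
  exact ⟨h, hh, t, rfl⟩

theorem wedge_decomp {H : Submodule F V} {e : V}
    (hdec : ∀ v : V, ∃ h ∈ H, ∃ t : F, v = h + t • e) :
    ∀ (n : ℕ) (x : ExteriorAlgebra F V), x ∈ ⋀[F]^n V →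
      ∃ y ∈ Ealg H n, ∃ z ∈ EalgPred H n, x = y + ExteriorAlgebra.ι F e * z := by
  intro n x hx
  rw [← ιMulti_span_fixedDegree] at hx
  induction hx using Submodule.span_induction with
  | mem w hw =>
    obtain ⟨v, rfl⟩ := hw
    induction n with
    | zero =>
      refine ⟨1, ?_, 0, Submodule.zero_mem _, by simp⟩
      apply Submodule.subset_span
      exact Set.mem_range.2 ⟨Fin.elim0, by simp [ιMulti_zero_apply]⟩
    | succ n ih =>
      obtain ⟨y, hy, z, hz, htail⟩ := ih (Matrix.vecTail v)
      obtain ⟨h₀, hh₀, t₀, hv0⟩ := hdec (v 0)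
      refine ⟨ExteriorAlgebra.ι F h₀ * y, mul_Ealg hh₀ hy,
        t₀ • y - ExteriorAlgebra.ι F h₀ * z, ?_, ?_⟩
      · have hy' : y ∈ EalgPred H (n + 1) := hy
        exact sub_mem (Submodule.smul_mem _ _ hy') (mul_EalgPred hh₀ hz)
      · have hswap : ExteriorAlgebra.ι F h₀ * ExteriorAlgebra.ι F e
            = -(ExteriorAlgebra.ι F e * ExteriorAlgebra.ι F h₀) :=
          eq_neg_of_add_eq_zero_left (ι_add_mul_swap h₀ e)
        rw [ιMulti_succ_apply, htail, hv0, map_add, map_smul]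
        rw [add_mul, mul_add, mul_add, smul_mul_assoc, smul_mul_assoc,
          ← mul_assoc (ExteriorAlgebra.ι F e) (ExteriorAlgebra.ι F e) z, ι_sq_zero,
          zero_mul, smul_zero, add_zero, ← mul_assoc, hswap, neg_mul, mul_assoc,
          mul_sub, mul_smul_comm]
        abel
  | zero => exact ⟨0, Submodule.zero_mem _, 0, Submodule.zero_mem _, by simp⟩
  | add a b _ _ ha hb =>
    obtain ⟨y1, hy1, z1, hz1, rfl⟩ := ha
    obtain ⟨y2, hy2, z2, hz2, rfl⟩ := hb
    exact ⟨y1 + y2, add_mem hy1 hy2, z1 + z2, add_mem hz1 hz2, by rw [mul_add]; abel⟩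
  | smul t a _ ha =>
    obtain ⟨y, hy, z, hz, rfl⟩ := ha
    exact ⟨t • y, Submodule.smul_mem _ _ hy, t • z, Submodule.smul_mem _ _ hz, by
      rw [smul_add, mul_smul_comm]⟩

theorem fixed_mem_Ealg [FiniteDimensional F V] {s : V →ₗ[F] V} (hs : IsReflection s) {d : ℕ}
    {x : ExteriorAlgebra F V} (hx : x ∈ ⋀[F]^d V) (hfix : ExteriorAlgebra.map s x = x) :
    x ∈ Ealg (LinearMap.ker (s - LinearMap.id)) d := by
  set H := LinearMap.ker (s - LinearMap.id (R := F) (M := V)) with hH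
  have hfixH : ∀ a ∈ H, s a = a := by
    intro a ha
    have := LinearMap.mem_ker.1 ha
    rw [LinearMap.sub_apply, LinearMap.id_apply, sub_eq_zero] at this
    exact this
  obtain ⟨c, e, hc, hse, hdec⟩ := reflection_struct hs
  obtain ⟨y, hy, z, hz, rfl⟩ := wedge_decomp hdec d x hx
  have hmapy : ExteriorAlgebra.map s y = y := Ealg_fix hfixH hy
  have hmapz : ExteriorAlgebra.map s z = z := EalgPred_fix hfixH hz
  have hfix' : y + c • (ExteriorAlgebra.ι F e * z)
      = y + ExteriorAlgebra.ι F e * z := by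
    calc y + c • (ExteriorAlgebra.ι F e * z)
        = ExteriorAlgebra.map s (y + ExteriorAlgebra.ι F e * z) := by
          rw [map_add, map_mul, hmapy, hmapz, map_apply_ι, hse, map_smul, smul_mul_assoc]
      _ = y + ExteriorAlgebra.ι F e * z := hfix
  have hz0 : ExteriorAlgebra.ι F e * z = 0 := by
    have h0 : (c - 1) • (ExteriorAlgebra.ι F e * z) = 0 := by
      rw [sub_smul, one_smul, sub_eq_zero]
      exact add_left_cancel hfix'
    rcases smul_eq_zero.1 h0 with h' | h'
    · exact absurd (sub_eq_zero.1 h') hc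
    · exact h'
  rw [hz0, add_zero]
  exact hy

theorem exists_proj [FiniteDimensional F V] (A B : Submodule F V) :
    ∃ p q : V →ₗ[F] V, (∀ a ∈ A, p a = a) ∧ (∀ b ∈ B, q b = b) ∧
      ∀ v : V, p (q v) ∈ A ⊓ B := by
  obtain ⟨B'', hB''⟩ := (Submodule.comap B.subtype (A ⊓ B)).exists_isCompl
  set B' : Submodule F V := B''.map B.subtype with hB'def
  have hCB' : (A ⊓ B) ⊔ B' = B := by
    have h1 : Submodule.map B.subtype (Submodule.comap B.subtype (A ⊓ B)) = A ⊓ B := by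
      rw [Submodule.map_comap_subtype]
      exact inf_of_le_right inf_le_right
    rw [← h1, hB'def, ← Submodule.map_sup, hB''.sup_eq_top, Submodule.map_top,
      Submodule.range_subtype]
  have hB'A : B' ⊓ A = ⊥ := by
    rw [Submodule.eq_bot_iff]
    rintro x ⟨hxB', hxA⟩
    obtain ⟨b, hb, rfl⟩ := hxB'
    have hbC : b ∈ Submodule.comap B.subtype (A ⊓ B) := by
      simp only [Submodule.mem_comap]
      exact ⟨hxA, b.2⟩
    have : b ∈ (⊥ : Submodule F B) := hB''.disjoint.symm.le_bot ⟨hb, hbC⟩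
    rw [Submodule.mem_bot] at this
    rw [this]
    rfl
  obtain ⟨D, hD⟩ := (B' ⊔ A).exists_isCompl
  have hcompl : IsCompl A (B' ⊔ D) := by
    constructor
    · rw [disjoint_iff, Submodule.eq_bot_iff]
      rintro x ⟨hxA, hxW⟩
      obtain ⟨b', hb', dd, hdd, rfl⟩ := Submodule.mem_sup.1 hxW
      have hdd0 : dd ∈ (B' ⊔ A) ⊓ D :=
        ⟨by
          have : dd = (b' + dd) - b' := by abel
          rw [this]
          exact Submodule.sub_mem _ (Submodule.mem_sup_right hxA)
            (Submodule.mem_sup_left hb'), hdd⟩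
      rw [hD.inf_eq_bot, Submodule.mem_bot] at hdd0
      rw [hdd0, add_zero] at hxA ⊢
      have : b' ∈ B' ⊓ A := ⟨hb', hxA⟩
      rwa [hB'A, Submodule.mem_bot] at this
    · rw [codisjoint_iff, ← sup_assoc, sup_comm A B', hD.sup_eq_top]
  obtain ⟨Bc, hBc⟩ := B.exists_isCompl
  refine ⟨A.subtype ∘ₗ (A.linearProjOfIsCompl _ hcompl),
    B.subtype ∘ₗ (B.linearProjOfIsCompl _ hBc), ?_, ?_, ?_⟩
  · intro a ha
    exact congrArg Subtype.val (Submodule.projectionOnto_apply_left hcompl ⟨a, ha⟩)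
  · intro b hb
    exact congrArg Subtype.val (Submodule.projectionOnto_apply_left hBc ⟨b, hb⟩)
  · intro v
    set qv := B.subtype (B.linearProjOfIsCompl _ hBc v) with hqv
    have hqvB : qv ∈ B := (B.linearProjOfIsCompl _ hBc v).2
    rw [← hCB'] at hqvB
    obtain ⟨cc, hcc, b', hb', hsum⟩ := Submodule.mem_sup.1 hqvB
    have hpcc : A.subtype (A.linearProjOfIsCompl _ hcompl cc) = cc := by
      exact congrArg Subtype.val (Submodule.projectionOnto_apply_left hcompl ⟨cc, hcc.1⟩)
    have hpb' : A.linearProjOfIsCompl _ hcompl b' = 0 :=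
      Submodule.projectionOnto_apply_of_mem_right hcompl (Submodule.mem_sup_left hb')
    show A.subtype (A.linearProjOfIsCompl _ hcompl qv) ∈ A ⊓ B
    rw [← hsum, map_add, hpb', map_add, hpcc]
    simpa using hcc

theorem Ealg_inf [FiniteDimensional F V] {A B : Submodule F V} {d : ℕ}
    {x : ExteriorAlgebra F V} (hx : x ∈ ⋀[F]^d V)
    (hA : x ∈ Ealg A d) (hB : x ∈ Ealg B d) : x ∈ Ealg (A ⊓ B) d := by
  obtain ⟨p, q, hp, hq, hpq⟩ := exists_proj A B
  have h1 : ExteriorAlgebra.map q x = x := Ealg_fix hq hB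
  have h2 : ExteriorAlgebra.map (p ∘ₗ q) x = x := by
    have : ExteriorAlgebra.map (p ∘ₗ q) x
        = ExteriorAlgebra.map p (ExteriorAlgebra.map q x) := by
      rw [← ExteriorAlgebra.map_comp_map]
      rfl
    rw [this, h1]
    exact Ealg_fix hp hA
  rw [← h2]
  exact map_mem_Ealg (fun v => hpq v) hx

set_option maxHeartbeats 1000000 in
theorem Ealg_iInf [FiniteDimensional F V] {d : ℕ} :
    ∀ (k : ℕ) (A : Fin k → Submodule F V) (x : ExteriorAlgebra F V), x ∈ ⋀[F]^d V →
      (∀ i, x ∈ Ealg (A i) d) → x ∈ Ealg (⨅ i, A i) d := by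
  intro k
  induction k with
  | zero =>
    intro A x hx _
    have h0 : (⨅ i : Fin 0, A i) = ⊤ := by
      apply le_antisymm le_top
      exact le_iInf fun i => i.elim0
    rw [h0]
    exact mem_exteriorPower_mem_Ealg_top hx
  | succ k ih =>
    intro A x hx h
    have hsplit : (⨅ i : Fin (k+1), A i) = A 0 ⊓ ⨅ i : Fin k, A i.succ := by
      apply le_antisymm
      · exact le_inf (iInf_le _ 0) (le_iInf fun i => iInf_le _ i.succ)
      · refine le_iInf fun i => ?_
        refine Fin.cases inf_le_left (fun j => le_trans inf_le_right (iInf_le _ j)) i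
    rw [hsplit]
    exact Ealg_inf hx (h 0) (ih (fun i => A i.succ) x hx (fun i => h i.succ))

theorem mem_range_extMap_iff {A : Submodule F V} {d : ℕ} (x : ⋀[F]^d V) :
    x ∈ LinearMap.range (extMap d A.subtype) ↔ (x : ExteriorAlgebra F V) ∈ Ealg A d := by
  rw [← map_subtype_exteriorPower_eq_Ealg]
  constructor
  · rintro ⟨z, rfl⟩
    exact ⟨z, z.2, (extMap_apply_coe d A.subtype z).symm⟩
  · rintro ⟨z, hz, hzx⟩
    refine ⟨⟨z, hz⟩, Subtype.ext ?_⟩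
    rw [extMap_apply_coe]
    exact hzx

/-- Let `ρ : W → GL(V)` be a finite-dimensional representation and let
`s 1, …, s k ∈ W` act on `V` as generalized reflections with reflection hyperplanes
`H i = ker (ρ (s i) - id)`. Then for every `0 ≤ d ≤ dim V`, the subspace of `⋀^d V` fixed
pointwise by all the `s i` equals `⋀^d (⋂_{1 ≤ i ≤ k} H i)`, regarded naturally as a
subspace of `⋀^d V`. -/
theorem fixed_subspace_eq_exteriorPower_iInf_hyperplanes
    [FiniteDimensional F V] (ρ : Representation F W V)
    {k : ℕ} (s : Fin k → W)
    (hrefl : ∀ i, IsReflection (ρ (s i))) :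
    ∀ d : ℕ, d ≤ Module.finrank F V →
      (⨅ i : Fin k, Module.End.eigenspace ((extRep ρ d) (s i)) 1) =
        LinearMap.range
          (extMap d (⨅ i : Fin k, LinearMap.ker (ρ (s i) - LinearMap.id)).subtype) := by
  intro d hd
  ext x
  simp only [Submodule.mem_iInf]
  rw [mem_range_extMap_iff]
  constructor
  · intro hfix
    refine Ealg_iInf k (fun i => LinearMap.ker (ρ (s i) - LinearMap.id)) _ x.2 fun i => ?_
    apply fixed_mem_Ealg (hrefl i) x.2
    have h1 : (extRep ρ d) (s i) x = x := by
      have := Module.End.mem_eigenspace_iff.1 (hfix i)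
      rwa [one_smul] at this
    have h2 : (↑((extRep ρ d) (s i) x) : ExteriorAlgebra F V)
        = ExteriorAlgebra.map (ρ (s i)) ↑x := rfl
    rw [← h2, h1]
  · intro hx i
    rw [Module.End.mem_eigenspace_iff, one_smul]
    apply Subtype.ext
    have h2 : (↑((extRep ρ d) (s i) x) : ExteriorAlgebra F V)
        = ExteriorAlgebra.map (ρ (s i)) ↑x := rfl
    rw [h2]
    refine Ealg_fix (fun a ha => ?_) (Ealg_mono (iInf_le _ i) d hx)
    have h3 := LinearMap.mem_ker.1 ha
    rwa [LinearMap.sub_apply, LinearMap.id_apply, sub_eq_zero] at h3
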